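/- Assume additionally that K ⊂ M is a closed set with μ(K) ≥ 1 − β₀ and that (𝔠 + 1)β₀ < 1. Then for every ε > 0 there exists a constant c = c(ε) > 0, depending only on ε, β₀, 𝔠 and the compact metric space M (in particular not on ω), such that for every ω ∈ 𝒢 there exist points p̂₋ ∈ K and p̂ ∈ M and a sequence n_i → ∞ with μ^n_ω( M^n_ω ∩ B(p̂, ε) ∩ f^n_{θ^{-n}ω}(B(p̂₋, ε)) ) ≥ c for all n = n_i, where B(·, ε) denotes the open ε-ball in M. -/

import Mathlib

open MeasureTheory

/-- `Q` is the i.i.d. product of `P` over the index type `ι`, characterized via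
finite-dimensional cylinder sets. -/
def IsIIDProduct {Ω : Type*} [MeasurableSpace Ω] (ι : Type*) (P : Measure Ω)
    (Q : Measure (ι → Ω)) : Prop :=
  IsProbabilityMeasure Q ∧
    ∀ (s : Finset ι) (t : ι → Set Ω), (∀ i, MeasurableSet (t i)) →
      Q {x : ι → Ω | ∀ i ∈ s, x i ∈ t i} = ∏ i ∈ s, P (t i)

/-- The composition `f^n_{θ^{-n} ω} = f_{ω_0} ∘ f_{ω_{-1}} ∘ ⋯ ∘ f_{ω_{-n+1}}`. -/
noncomputable def fwdPast {Ω M : Type*} [TopologicalSpace M] (f : Ω → Homeomorph M M)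
    (ω : ℤ → Ω) : ℕ → M → M
  | 0 => id
  | n + 1 => (fwdPast f ω n) ∘ ⇑(f (ω (-(n : ℤ))))

/-- The backward composition `f^{-n}_ω = f^{-1}_{ω_{-(n-1)}} ∘ ⋯ ∘ f^{-1}_{ω_0}`. -/
noncomputable def bwdPast {Ω M : Type*} [TopologicalSpace M] (f : Ω → Homeomorph M M)
    (ω : ℤ → Ω) : ℕ → M → M
  | 0 => id
  | n + 1 => ⇑(f (ω (-(n : ℤ)))).symm ∘ (bwdPast f ω n)

/-- The set `M^n_ω = {x ∈ M : (f^{-n}_ω x, ((θ^{-n}ω)_k)_{k ≥ 1}) ∈ Θ_n⁺}`. -/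
noncomputable def MSet {Ω M : Type*} [TopologicalSpace M] (f : Ω → Homeomorph M M)
    (Θp : ℕ → Set (M × (ℕ → Ω))) (ω : ℤ → Ω) (n : ℕ) : Set M :=
  {x : M | (bwdPast f ω n x, fun j : ℕ => ω ((j : ℤ) + 1 - (n : ℤ))) ∈ Θp n}

section Aux

variable {Ω M : Type*} [TopologicalSpace M] (f : Ω → Homeomorph M M) (ω : ℤ → Ω)

lemma fwdPast_exists_homeo (n : ℕ) : ∃ h : Homeomorph M M, fwdPast f ω n = ⇑h := by
  induction n with
  | zero => exact ⟨Homeomorph.refl M, rfl⟩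
  | succ n ih =>
    obtain ⟨h, hh⟩ := ih
    refine ⟨(f (ω (-(n : ℤ)))).trans h, ?_⟩
    show fwdPast f ω n ∘ ⇑(f (ω (-(n : ℤ)))) = _
    rw [hh]
    rfl

lemma bwdPast_continuous (n : ℕ) : Continuous (bwdPast f ω n) := by
  induction n with
  | zero => exact continuous_id
  | succ n ih => exact (f (ω (-(n : ℤ)))).symm.continuous.comp ih

lemma mset_measurableSet [MeasurableSpace M] [BorelSpace M] [MeasurableSpace Ω]
    (Θp : ℕ → Set (M × (ℕ → Ω))) (n : ℕ) (hΘ : MeasurableSet (Θp n)) :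
    MeasurableSet (MSet f Θp ω n) := by
  have hm : Measurable fun x : M =>
      ((bwdPast f ω n x, fun j : ℕ => ω ((j : ℤ) + 1 - (n : ℤ))) : M × (ℕ → Ω)) :=
    Measurable.prodMk (bwdPast_continuous f ω n).measurable measurable_const
  exact hm hΘ

end Aux

set_option maxHeartbeats 1000000 in
/-- Lemma 4.3 (accumulating mass): there is a constant `c(ε) > 0`, depending only on
`ε`, `β₀`, `𝔠` and the compact metric space `M` (in particular not on `ω`), such that for
every `ω ∈ 𝒢` there are a source center `p̂₋ ∈ K`, a target center `p̂ ∈ M`, and a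
sequence `n_i → ∞` along which `μ^n_ω(M^n_ω ∩ B(p̂, ε) ∩ f^n_{θ^{-n}ω} B(p̂₋, ε)) ≥ c`. -/
theorem accumulate_mass
    {M : Type*} [MetricSpace M] [CompactSpace M] [MeasurableSpace M] [BorelSpace M]
    (β0 : ℝ) (hβ0 : β0 ∈ Set.Ioo (0 : ℝ) 1) (c : ℝ) (hc : 1 < c)
    (hcb : (c + 1) * β0 < 1) (ε : ℝ) (hε : 0 < ε) :
    ∃ cε : ℝ, 0 < cε ∧
      ∀ (Ω : Type*) [TopologicalSpace Ω] [PolishSpace Ω] [MeasurableSpace Ω] [BorelSpace Ω],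
      ∀ f : Ω → Homeomorph M M,
        Measurable (fun p : Ω × M => f p.1 p.2) →
        Measurable (fun p : Ω × M => (f p.1).symm p.2) →
      ∀ P : Measure Ω, IsProbabilityMeasure P →
      ∀ Pplus : Measure (ℕ → Ω), IsIIDProduct ℕ P Pplus →
      ∀ μ : Measure M, IsProbabilityMeasure μ →
      ∀ Θp : ℕ → Set (M × (ℕ → Ω)),
        (∀ n, MeasurableSet (Θp n)) →
        (∀ n, 1 ≤ n → ENNReal.ofReal (1 - β0) ≤ (μ.prod Pplus) (Θp n)) →
      ∀ K : Set M, IsClosed K → ENNReal.ofReal (1 - β0) ≤ μ K →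
      ∀ ω : ℤ → Ω,
        ω ∈ ⋂ N ≥ 1, ⋃ n ≥ N, {ω' : ℤ → Ω |
            ENNReal.ofReal (1 - c * β0) ≤
              (Measure.map (fwdPast f ω' n) μ) (MSet f Θp ω' n)} →
        ∃ pminus ∈ K, ∃ p : M, ∃ ni : ℕ → ℕ, StrictMono ni ∧
          ∀ i : ℕ, ENNReal.ofReal cε ≤
            (Measure.map (fwdPast f ω (ni i)) μ)
              (MSet f Θp ω (ni i) ∩ Metric.ball p ε ∩
                (fwdPast f ω (ni i)) '' (Metric.ball pminus ε)) := by
    classical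
  -- finite (ε/2)-net of M
  obtain ⟨t, -, htfin, htcov⟩ :=
    finite_cover_balls_of_compact (isCompact_univ (X := M)) (half_pos hε)
  set s : Finset M := htfin.toFinset with hs_def
  have hscov : ∀ z : M, ∃ x ∈ s, z ∈ Metric.ball x (ε / 2) := by
    intro z
    have := htcov (Set.mem_univ z)
    simp only [Set.mem_iUnion, exists_prop] at this
    obtain ⟨x, hx1, hx2⟩ := this
    exact ⟨x, htfin.mem_toFinset.mpr hx1, hx2⟩
  set Nc : ℕ := s.card * s.card with hNc_def
  set δ : ℝ := 1 - (c + 1) * β0 with hδ_def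
  have hδpos : 0 < δ := by simp only [hδ_def]; linarith
  have hcβ : 0 ≤ c * β0 := by nlinarith [hβ0.1.le]
  have hcβ1 : c * β0 ≤ 1 := by nlinarith [hβ0.1.le]
  refine ⟨δ / (Nc + 1), by positivity, ?_⟩
  intro Ω _ _ _ _ f hf hf' P hP Pplus hPplus μ hμ Θp hΘm hΘ K hKc hKμ ω hω
  -- centers in K
  set k : M → M := fun x =>
    if h : (Metric.ball x (ε / 2) ∩ K).Nonempty then h.choose else x with hk_def
  have hkK : ∀ x, (Metric.ball x (ε / 2) ∩ K).Nonempty → k x ∈ K := by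
    intro x hx
    simp only [hk_def, dif_pos hx]
    exact hx.choose_spec.2
  have hkball : ∀ x, (Metric.ball x (ε / 2) ∩ K).Nonempty →
      Metric.ball x (ε / 2) ⊆ Metric.ball (k x) ε := by
    intro x hx w hw
    have h1 : k x ∈ Metric.ball x (ε / 2) := by
      simp only [hk_def, dif_pos hx]; exact hx.choose_spec.1
    have := Metric.mem_ball.mp hw
    have := Metric.mem_ball.mp h1
    rw [Metric.mem_ball]
    calc dist w (k x) ≤ dist w x + dist x (k x) := dist_triangle _ _ _
      _ < ε / 2 + ε / 2 := by rw [dist_comm x (k x)]; linarith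
      _ = ε := by ring
  -- good times occur frequently
  have hfreqGood : ∃ᶠ n in Filter.atTop, ENNReal.ofReal (1 - c * β0) ≤
      (Measure.map (fwdPast f ω n) μ) (MSet f Θp ω n) := by
    rw [Filter.frequently_atTop]
    intro a
    have h1 := hω
    simp only [Set.mem_iInter, Set.mem_iUnion, Set.mem_setOf_eq, exists_prop] at h1
    obtain ⟨n, hn1, hn2⟩ := h1 (max a 1) (le_max_right a 1)
    exact ⟨n, le_trans (le_max_left a 1) hn1, hn2⟩
  -- the chosen index finset
  set F : Finset (M × M) :=
    (s.filter (fun x => (Metric.ball x (ε / 2) ∩ K).Nonempty)) ×ˢ s with hF_def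
  have hFcard : F.card ≤ Nc := by
    rw [hF_def, Finset.card_product, hNc_def]
    exact Nat.mul_le_mul_right _ (Finset.card_filter_le _ _)
  -- key claim at each good time
  have key : ∀ n : ℕ, ENNReal.ofReal (1 - c * β0) ≤
      (Measure.map (fwdPast f ω n) μ) (MSet f Θp ω n) →
      ∃ q ∈ F, ENNReal.ofReal (δ / (Nc + 1)) ≤
        (Measure.map (fwdPast f ω n) μ)
          (MSet f Θp ω n ∩ Metric.ball q.2 ε ∩
            (fwdPast f ω n) '' (Metric.ball (k q.1) ε)) := by
    intro n hgood
    obtain ⟨h, hh⟩ := fwdPast_exists_homeo f ω n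
    rw [hh] at hgood ⊢
    set ν : Measure M := Measure.map (⇑h) μ with hν_def
    haveI : IsProbabilityMeasure ν :=
      Measure.isProbabilityMeasure_map h.continuous.measurable.aemeasurable
    set A : Set M := MSet f Θp ω n with hA_def
    have hAm : MeasurableSet A := mset_measurableSet f ω Θp n (hΘm n)
    -- ν (h '' K) = μ K
    have hKcpt : IsCompact K := hKc.isCompact
    have himgm : MeasurableSet (⇑h '' K) := ((hKcpt.image h.continuous).isClosed).measurableSet
    have e1 : ν (⇑h '' K) = μ K := by
      rw [hν_def, Measure.map_apply h.continuous.measurable himgm,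
        Set.preimage_image_eq _ h.injective]
    -- ν Aᶜ ≤ ofReal (c * β0)
    have e2 : ν Aᶜ ≤ ENNReal.ofReal (c * β0) := by
      rw [measure_compl hAm (measure_ne_top _ _), measure_univ]
      have : ENNReal.ofReal (c * β0) = 1 - ENNReal.ofReal (1 - c * β0) := by
        rw [← ENNReal.ofReal_one, ← ENNReal.ofReal_sub _ (by linarith)]
        norm_num
      rw [this]
      exact tsub_le_tsub_left hgood 1
    -- ofReal δ ≤ ν (A ∩ h '' K)
    have e3 : ENNReal.ofReal δ ≤ ν (A ∩ ⇑h '' K) := by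
      have sub1 : ν (⇑h '' K) ≤ ν (A ∩ ⇑h '' K) + ν Aᶜ := by
        refine le_trans (measure_mono ?_) (measure_union_le _ _)
        intro z hz
        by_cases hzA : z ∈ A
        · exact Or.inl ⟨hzA, hz⟩
        · exact Or.inr hzA
      have h1 : ENNReal.ofReal (1 - β0) ≤ ν (A ∩ ⇑h '' K) + ENNReal.ofReal (c * β0) :=
        le_trans hKμ (le_trans (e1 ▸ sub1) (add_le_add le_rfl e2))
      have : ENNReal.ofReal δ = ENNReal.ofReal (1 - β0) - ENNReal.ofReal (c * β0) := by
        rw [← ENNReal.ofReal_sub _ hcβ]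
        congr 1
        simp only [hδ_def]; ring
      rw [this]
      exact tsub_le_iff_right.mpr h1
    -- covering
    have hcover : A ∩ ⇑h '' K ⊆ ⋃ q ∈ F, (A ∩ Metric.ball q.2 ε ∩
        ⇑h '' (Metric.ball (k q.1) ε)) := by
      rintro z ⟨hzA, w, hwK, rfl⟩
      obtain ⟨x, hxs, hxw⟩ := hscov w
      obtain ⟨y, hys, hyz⟩ := hscov (h w)
      have hxne : (Metric.ball x (ε / 2) ∩ K).Nonempty := ⟨w, hxw, hwK⟩
      refine Set.mem_biUnion (show ((x, y) : M × M) ∈ F from ?_) ?_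
      · rw [hF_def, Finset.mem_product]
        exact ⟨Finset.mem_filter.mpr ⟨hxs, hxne⟩, hys⟩
      · exact ⟨⟨hzA, Metric.ball_subset_ball (by linarith) hyz⟩,
          w, hkball x hxne hxw, rfl⟩
    have e4 : ENNReal.ofReal δ ≤ ∑ q ∈ F, ν (A ∩ Metric.ball q.2 ε ∩
        ⇑h '' (Metric.ball (k q.1) ε)) :=
      le_trans e3 (le_trans (measure_mono hcover) (measure_biUnion_finset_le _ _))
    -- pigeonhole
    by_contra hcon
    push_neg at hcon
    have hsum : ∑ q ∈ F, ν (A ∩ Metric.ball q.2 ε ∩ ⇑h '' (Metric.ball (k q.1) ε))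
        ≤ F.card • ENNReal.ofReal (δ / (Nc + 1)) :=
      Finset.sum_le_card_nsmul _ _ _ (fun q hq => (hcon q hq).le)
    have hlt : (F.card : ENNReal) * ENNReal.ofReal (δ / (Nc + 1)) < ENNReal.ofReal δ := by
      calc (F.card : ENNReal) * ENNReal.ofReal (δ / (Nc + 1))
          ≤ (Nc : ENNReal) * ENNReal.ofReal (δ / (Nc + 1)) :=
            by gcongr
        _ = ENNReal.ofReal ((Nc : ℝ) * (δ / (Nc + 1))) := by
            rw [ENNReal.ofReal_mul (by positivity), ENNReal.ofReal_natCast]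
        _ < ENNReal.ofReal δ := by
            rw [ENNReal.ofReal_lt_ofReal_iff hδpos]
            have hN : (0:ℝ) < (Nc:ℝ) + 1 := by positivity
            rw [← mul_div_assoc, div_lt_iff₀ hN]
            nlinarith [Nat.cast_nonneg (α := ℝ) Nc]
    rw [nsmul_eq_mul] at hsum
    exact absurd (le_trans e4 hsum) (not_le.mpr hlt)
  -- pigeonhole over frequently
  have hfreqQ : ∃ᶠ n in Filter.atTop, ∃ q ∈ F, ENNReal.ofReal (δ / (Nc + 1)) ≤
      (Measure.map (fwdPast f ω n) μ)
        (MSet f Θp ω n ∩ Metric.ball q.2 ε ∩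
          (fwdPast f ω n) '' (Metric.ball (k q.1) ε)) :=
    hfreqGood.mono key
  have hpick : ∃ q ∈ F, ∃ᶠ n in Filter.atTop, ENNReal.ofReal (δ / (Nc + 1)) ≤
      (Measure.map (fwdPast f ω n) μ)
        (MSet f Θp ω n ∩ Metric.ball q.2 ε ∩
          (fwdPast f ω n) '' (Metric.ball (k q.1) ε)) := by
    by_contra hcon
    push_neg at hcon
    have hev : ∀ᶠ n in Filter.atTop, ∀ q ∈ F, ¬ (ENNReal.ofReal (δ / (Nc + 1)) ≤
        (Measure.map (fwdPast f ω n) μ)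
          (MSet f Θp ω n ∩ Metric.ball q.2 ε ∩
            (fwdPast f ω n) '' (Metric.ball (k q.1) ε))) :=
      (Filter.eventually_all_finset F).mpr
        (fun q hq => (hcon q hq).mono (fun n hn => not_le.mpr hn))
    obtain ⟨n, hn1, hn2⟩ := (hfreqQ.and_eventually hev).exists
    obtain ⟨q, hq, hq2⟩ := hn1
    exact hn2 q hq hq2
  obtain ⟨q, hqF, hqfreq⟩ := hpick
  obtain ⟨ni, hni, hniQ⟩ := Filter.extraction_of_frequently_atTop hqfreq
  have hq1 : (Metric.ball q.1 (ε / 2) ∩ K).Nonempty := by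
    rw [hF_def, Finset.mem_product] at hqF
    exact (Finset.mem_filter.mp hqF.1).2
  exact ⟨k q.1, hkK q.1 hq1, q.2, ni, hni, hniQ⟩
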